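/- The Bellman operator T maps bounded functions on [0,1] to bounded functions, maps continuous functions to continuous functions, and is a contraction with Lipschitz constant ρ with respect to the supremum norm; hence T has a unique bounded fixed point V, which is continuous. Moreover, under assumption (A1) and l1, l2, l3 > 0, the fixed point V is nonincreasing on [0,1]: q1 ≤ q2 implies V(q1) ≥ V(q2). -/

import Mathlib

/-- Probability of observation `y` under belief `q`, where `b1 = B_{1y}` and `b2 = B_{2y}`. -/
noncomputable def slSig (b1 b2 q : ℝ) : ℝ := b1 * (1 - q) + b2 * q

/-- Private (Bayesian posterior) belief after observation `y`. -/
noncomputable def slEta (b1 b2 q : ℝ) : ℝ := b2 * q / slSig b1 b2 q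

/-- Incentive function `Δ_y(q) = l1 + l3 - (l1 + l2) η_y(q)`. -/
noncomputable def slDelta (l1 l2 l3 b1 b2 q : ℝ) : ℝ := l1 + l3 - (l1 + l2) * slEta b1 b2 q

/-- The Bellman operator of the fusion center:
`(T V)(q) = min{0, Δ_2(q) − φ + ρ(σ_1(q) V(η_1(q)) + σ_2(q) V(η_2(q)))}`. -/
noncomputable def slT (B11 B12 B21 B22 l1 l2 l3 φ ρ : ℝ) (V : ℝ → ℝ) (q : ℝ) : ℝ :=
  min 0 (slDelta l1 l2 l3 B12 B22 q - φ +
    ρ * (slSig B11 B21 q * V (slEta B11 B21 q) + slSig B12 B22 q * V (slEta B12 B22 q)))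

lemma sig_pos {b1 b2 : ℝ} (hb1 : 0 < b1) (hb2 : 0 < b2) {q : ℝ} (h0 : 0 ≤ q) (h1 : q ≤ 1) :
    0 < slSig b1 b2 q := by
  unfold slSig
  calc (0:ℝ) < min b1 b2 := lt_min hb1 hb2
    _ = min b1 b2 * (1 - q) + min b1 b2 * q := by ring
    _ ≤ b1 * (1 - q) + b2 * q :=
        add_le_add (mul_le_mul_of_nonneg_right (min_le_left _ _) (by linarith))
          (mul_le_mul_of_nonneg_right (min_le_right _ _) h0)

lemma eta_mem {b1 b2 : ℝ} (hb1 : 0 < b1) (hb2 : 0 < b2) {q : ℝ} (h0 : 0 ≤ q) (h1 : q ≤ 1) :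
    slEta b1 b2 q ∈ Set.Icc (0:ℝ) 1 := by
  have hs := sig_pos hb1 hb2 h0 h1
  constructor
  · exact div_nonneg (by positivity) hs.le
  · rw [slEta, div_le_one hs]; unfold slSig; nlinarith

lemma eta_mono {b1 b2 : ℝ} (hb1 : 0 < b1) (hb2 : 0 < b2) {q q' : ℝ}
    (h0 : 0 ≤ q) (h : q ≤ q') (h1 : q' ≤ 1) : slEta b1 b2 q ≤ slEta b1 b2 q' := by
  have hs := sig_pos hb1 hb2 h0 (h.trans h1)
  have hs' := sig_pos hb1 hb2 (h0.trans h) h1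
  rw [slEta, slEta, div_le_div_iff₀ hs hs']
  unfold slSig
  nlinarith [mul_nonneg (mul_nonneg hb1.le hb2.le) (sub_nonneg.2 h)]

lemma eta_cont {b1 b2 : ℝ} (hb1 : 0 < b1) (hb2 : 0 < b2) :
    ContinuousOn (slEta b1 b2) (Set.Icc (0:ℝ) 1) := by
  apply ContinuousOn.div
  · fun_prop
  · unfold slSig; fun_prop
  · exact fun q hq => (sig_pos hb1 hb2 hq.1 hq.2).ne'

section
variable {B11 B12 B21 B22 l1 l2 l3 φ ρ : ℝ}
variable (hB11 : 0 < B11) (hB12 : 0 < B12) (hB21 : 0 < B21) (hB22 : 0 < B22)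
variable (hrow1 : B11 + B12 = 1) (hrow2 : B21 + B22 = 1)
variable (hA1 : B11 * B22 - B12 * B21 ≥ 0)

include hrow1 hrow2 in
lemma sig_sum (q : ℝ) : slSig B11 B21 q + slSig B12 B22 q = 1 := by
  unfold slSig; linear_combination (1 - q) * hrow1 + q * hrow2

include hB11 hB12 hB21 hB22 hrow1 hrow2 hA1 in
lemma B21_le_B11 : B21 ≤ B11 := by nlinarith

include hB11 hB12 hB21 hB22 hA1 in
lemma eta1_le_eta2 {q : ℝ} (h0 : 0 ≤ q) (h1 : q ≤ 1) :
    slEta B11 B21 q ≤ slEta B12 B22 q := by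
  have hs1 := sig_pos hB11 hB21 h0 h1
  have hs2 := sig_pos hB12 hB22 h0 h1
  rw [slEta, slEta, div_le_div_iff₀ hs1 hs2]
  unfold slSig
  nlinarith [mul_nonneg (mul_nonneg h0 (sub_nonneg.2 h1)) hA1]

lemma min0_lip (a b : ℝ) : |min 0 a - min 0 b| ≤ |a - b| := by
  rcases le_total a 0 with h | h <;> rcases le_total b 0 with h' | h' <;>
    rw [abs_le] <;>
    constructor <;>
    simp [min_eq_left, min_eq_right, min_eq_left h, min_eq_right, *] <;>
    cases abs_cases (a - b) <;> cases abs_cases (b - a) <;> linarith [abs_sub_comm a b]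
end

section
variable {B11 B12 B21 B22 l1 l2 l3 φ ρ : ℝ}
variable (hB11 : 0 < B11) (hB12 : 0 < B12) (hB21 : 0 < B21) (hB22 : 0 < B22)
variable (hrow1 : B11 + B12 = 1) (hrow2 : B21 + B22 = 1)
variable (hA1 : B11 * B22 - B12 * B21 ≥ 0)
variable (hl1 : 0 < l1) (hl2 : 0 < l2) (hl3 : 0 < l3)
variable (hρ0 : 0 ≤ ρ)

set_option linter.unusedSectionVars false

-- bounded to bounded
set_option maxHeartbeats 1000000 in
include hB11 hB12 hB21 hB22 hrow1 hrow2 hρ0 in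
lemma slT_bounded (V : ℝ → ℝ) (hV : ∃ M, ∀ q ∈ Set.Icc (0:ℝ) 1, |V q| ≤ M) :
    ∃ M, ∀ q ∈ Set.Icc (0:ℝ) 1, |slT B11 B12 B21 B22 l1 l2 l3 φ ρ V q| ≤ M := by
  obtain ⟨M, hM⟩ := hV
  have hM0 : 0 ≤ M := (abs_nonneg _).trans (hM 0 (by norm_num))
  refine ⟨|l1| + |l3| + (|l1| + |l2|) + |φ| + ρ * M, fun q hq => ?_⟩
  obtain ⟨h0, h1⟩ := hq
  have hs1 := sig_pos hB11 hB21 h0 h1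
  have hs2 := sig_pos hB12 hB22 h0 h1
  have hsum := sig_sum hrow1 hrow2 q
  have he1 := eta_mem hB11 hB21 h0 h1
  have he2 := eta_mem hB12 hB22 h0 h1
  have he2' := eta_mem hB12 hB22 h0 h1
  have hV1 := abs_le.1 (hM _ he1)
  have hV2 := abs_le.1 (hM _ he2)
  have hD : |slDelta l1 l2 l3 B12 B22 q| ≤ |l1| + |l3| + (|l1| + |l2|) := by
    have hmul : |(l1 + l2) * slEta B12 B22 q| ≤ |l1| + |l2| := by
      rw [abs_mul]
      calc |l1 + l2| * |slEta B12 B22 q| ≤ (|l1| + |l2|) * 1 := by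
            apply mul_le_mul (abs_add_le l1 l2) _ (abs_nonneg _)
              (by positivity)
            rw [abs_of_nonneg he2'.1]; exact he2'.2
        _ = |l1| + |l2| := mul_one _
    have hmul' := abs_le.1 hmul
    rw [slDelta, abs_le]
    constructor <;>
      [linarith [neg_abs_le l1, neg_abs_le l3, hmul'.2];
       linarith [le_abs_self l1, le_abs_self l3, hmul'.1]]
  have hDa := abs_le.1 hD
  rw [slT, abs_le]
  have habs : |min (0:ℝ)
      (slDelta l1 l2 l3 B12 B22 q - φ +
        ρ * (slSig B11 B21 q * V (slEta B11 B21 q) + slSig B12 B22 q * V (slEta B12 B22 q)))| ≤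
      |slDelta l1 l2 l3 B12 B22 q - φ +
        ρ * (slSig B11 B21 q * V (slEta B11 B21 q) + slSig B12 B22 q * V (slEta B12 B22 q))| := by
    have := min0_lip (slDelta l1 l2 l3 B12 B22 q - φ +
        ρ * (slSig B11 B21 q * V (slEta B11 B21 q) + slSig B12 B22 q * V (slEta B12 B22 q))) 0
    simpa using this
  rw [← abs_le]
  refine habs.trans ?_
  have e1 := mul_le_mul_of_nonneg_left hV1.2 hs1.le
  have e1' := mul_le_mul_of_nonneg_left hV1.1 hs1.le
  have e2 := mul_le_mul_of_nonneg_left hV2.2 hs2.le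
  have e2' := mul_le_mul_of_nonneg_left hV2.1 hs2.le
  have hS : -M ≤ slSig B11 B21 q * V (slEta B11 B21 q) + slSig B12 B22 q * V (slEta B12 B22 q) ∧
      slSig B11 B21 q * V (slEta B11 B21 q) + slSig B12 B22 q * V (slEta B12 B22 q) ≤ M :=
    ⟨by nlinarith, by nlinarith⟩
  have hρS : -(ρ * M) ≤ ρ * (slSig B11 B21 q * V (slEta B11 B21 q) +
      slSig B12 B22 q * V (slEta B12 B22 q)) ∧
      ρ * (slSig B11 B21 q * V (slEta B11 B21 q) +
      slSig B12 B22 q * V (slEta B12 B22 q)) ≤ ρ * M := by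
    constructor <;> nlinarith [hS.1, hS.2]
  rw [abs_le]
  constructor <;> [nlinarith [le_abs_self φ, hρS.1, hDa.1]; nlinarith [neg_abs_le φ, hρS.2, hDa.2]]

-- continuous to continuous
include hB11 hB12 hB21 hB22 in
lemma slT_cont (V : ℝ → ℝ) (hV : ContinuousOn V (Set.Icc (0:ℝ) 1)) :
    ContinuousOn (slT B11 B12 B21 B22 l1 l2 l3 φ ρ V) (Set.Icc (0:ℝ) 1) := by
  have hmap1 : Set.MapsTo (slEta B11 B21) (Set.Icc (0:ℝ) 1) (Set.Icc (0:ℝ) 1) :=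
    fun q hq => eta_mem hB11 hB21 hq.1 hq.2
  have hmap2 : Set.MapsTo (slEta B12 B22) (Set.Icc (0:ℝ) 1) (Set.Icc (0:ℝ) 1) :=
    fun q hq => eta_mem hB12 hB22 hq.1 hq.2
  have h1 : ContinuousOn (fun q => V (slEta B11 B21 q)) (Set.Icc (0:ℝ) 1) :=
    hV.comp (eta_cont hB11 hB21) hmap1
  have h2 : ContinuousOn (fun q => V (slEta B12 B22 q)) (Set.Icc (0:ℝ) 1) :=
    hV.comp (eta_cont hB12 hB22) hmap2
  have hsc1 : ContinuousOn (slSig B11 B21) (Set.Icc (0:ℝ) 1) := by unfold slSig; fun_prop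
  have hsc2 : ContinuousOn (slSig B12 B22) (Set.Icc (0:ℝ) 1) := by unfold slSig; fun_prop
  have hd : ContinuousOn (slDelta l1 l2 l3 B12 B22) (Set.Icc (0:ℝ) 1) := by
    unfold slDelta
    exact continuousOn_const.sub (continuousOn_const.mul (eta_cont hB12 hB22))
  unfold slT
  have hg : ContinuousOn (fun q => slDelta l1 l2 l3 B12 B22 q - φ +
      ρ * (slSig B11 B21 q * V (slEta B11 B21 q) + slSig B12 B22 q * V (slEta B12 B22 q)))
      (Set.Icc (0:ℝ) 1) :=
    (hd.sub continuousOn_const).add (continuousOn_const.mul ((hsc1.mul h1).add (hsc2.mul h2)))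
  exact continuous_min.comp_continuousOn (continuousOn_const.prodMk hg)

-- contraction pointwise
include hB11 hB12 hB21 hB22 hrow1 hrow2 hρ0 in
lemma slT_contraction (V W : ℝ → ℝ) (C : ℝ)
    (hC : ∀ q ∈ Set.Icc (0:ℝ) 1, |V q - W q| ≤ C) :
    ∀ q ∈ Set.Icc (0:ℝ) 1,
      |slT B11 B12 B21 B22 l1 l2 l3 φ ρ V q - slT B11 B12 B21 B22 l1 l2 l3 φ ρ W q| ≤ ρ * C := by
  intro q hq
  obtain ⟨h0, h1⟩ := hq
  have hs1 := sig_pos hB11 hB21 h0 h1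
  have hs2 := sig_pos hB12 hB22 h0 h1
  have hsum := sig_sum hrow1 hrow2 q
  have hd1 := abs_le.1 (hC _ (eta_mem hB11 hB21 h0 h1))
  have hd2 := abs_le.1 (hC _ (eta_mem hB12 hB22 h0 h1))
  rw [slT, slT]
  refine (min0_lip _ _).trans ?_
  rw [abs_le]
  have e1 := mul_le_mul_of_nonneg_left hd1.2 hs1.le
  have e1' := mul_le_mul_of_nonneg_left hd1.1 hs1.le
  have e2 := mul_le_mul_of_nonneg_left hd2.2 hs2.le
  have e2' := mul_le_mul_of_nonneg_left hd2.1 hs2.le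
  constructor <;>
  · have key : slSig B11 B21 q * (V (slEta B11 B21 q) - W (slEta B11 B21 q)) +
        slSig B12 B22 q * (V (slEta B12 B22 q) - W (slEta B12 B22 q)) ≤ C ∧
        -C ≤ slSig B11 B21 q * (V (slEta B11 B21 q) - W (slEta B11 B21 q)) +
        slSig B12 B22 q * (V (slEta B12 B22 q) - W (slEta B12 B22 q)) := by
      constructor <;> nlinarith
    nlinarith [mul_le_mul_of_nonneg_left key.1 hρ0, mul_le_mul_of_nonneg_left key.2 hρ0]

-- antitone preservation
include hB11 hB12 hB21 hB22 hrow1 hrow2 hA1 hl1 hl2 hρ0 in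
lemma slT_anti (V : ℝ → ℝ) (hV : ∀ a b : ℝ, 0 ≤ a → a ≤ b → b ≤ 1 → V b ≤ V a) :
    ∀ q1 q2 : ℝ, 0 ≤ q1 → q1 ≤ q2 → q2 ≤ 1 →
      slT B11 B12 B21 B22 l1 l2 l3 φ ρ V q2 ≤ slT B11 B12 B21 B22 l1 l2 l3 φ ρ V q1 := by
  intro q1 q2 h0 h12 h1
  have h1' : q1 ≤ 1 := h12.trans h1
  have h0' : 0 ≤ q2 := h0.trans h12
  have hd : slDelta l1 l2 l3 B12 B22 q2 ≤ slDelta l1 l2 l3 B12 B22 q1 := by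
    have := eta_mono hB12 hB22 h0 h12 h1
    unfold slDelta; nlinarith
  -- value term
  have heA := eta_mem hB11 hB21 h0 h1'
  have heB := eta_mem hB12 hB22 h0 h1'
  have heA' := eta_mem hB11 hB21 h0' h1
  have heB' := eta_mem hB12 hB22 h0' h1
  have hVA : V (slEta B11 B21 q2) ≤ V (slEta B11 B21 q1) :=
    hV _ _ heA.1 (eta_mono hB11 hB21 h0 h12 h1) heA'.2
  have hVB : V (slEta B12 B22 q2) ≤ V (slEta B12 B22 q1) :=
    hV _ _ heB.1 (eta_mono hB12 hB22 h0 h12 h1) heB'.2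
  have hVAB : V (slEta B12 B22 q1) ≤ V (slEta B11 B21 q1) :=
    hV _ _ heA.1 (eta1_le_eta2 hB11 hB12 hB21 hB22 hA1 h0 h1') heB.2
  have hs1 := sig_pos hB11 hB21 h0' h1
  have hs2 := sig_pos hB12 hB22 h0' h1
  have hsum1 := sig_sum hrow1 hrow2 q1
  have hsum2 := sig_sum hrow1 hrow2 q2
  have hB : B21 ≤ B11 := B21_le_B11 hB11 hB12 hB21 hB22 hrow1 hrow2 hA1
  have hσ : slSig B11 B21 q2 ≤ slSig B11 B21 q1 := by
    unfold slSig; nlinarith [mul_nonneg (sub_nonneg.2 hB) (sub_nonneg.2 h12)]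
  have hg : slSig B11 B21 q2 * V (slEta B11 B21 q2) + slSig B12 B22 q2 * V (slEta B12 B22 q2) ≤
      slSig B11 B21 q1 * V (slEta B11 B21 q1) + slSig B12 B22 q1 * V (slEta B12 B22 q1) := by
    have step1 : slSig B11 B21 q2 * V (slEta B11 B21 q2) +
        slSig B12 B22 q2 * V (slEta B12 B22 q2) ≤
        slSig B11 B21 q2 * V (slEta B11 B21 q1) + slSig B12 B22 q2 * V (slEta B12 B22 q1) :=
      add_le_add (mul_le_mul_of_nonneg_left hVA hs1.le) (mul_le_mul_of_nonneg_left hVB hs2.le)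
    refine step1.trans ?_
    have e1 : slSig B12 B22 q1 = 1 - slSig B11 B21 q1 := by linarith
    have e2 : slSig B12 B22 q2 = 1 - slSig B11 B21 q2 := by linarith
    rw [e1, e2]
    nlinarith [mul_nonneg (sub_nonneg.2 hσ) (sub_nonneg.2 hVAB)]
  rw [slT, slT]
  exact min_le_min le_rfl (by linarith [mul_le_mul_of_nonneg_left hg hρ0])
end

/-- the Bellman operator `T` maps functions bounded on `[0,1]` to functions
bounded on `[0,1]`, maps functions continuous on `[0,1]` to functions continuous on `[0,1]`,
and is a `ρ`-contraction in the supremum norm over `[0,1]`; hence it has a (bounded)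
fixed point `V` on `[0,1]`, unique among bounded functions, which is continuous and,
under (A1) and `l1, l2, l3 > 0`, nonincreasing on `[0,1]`. -/
theorem stmt11
    (B11 B12 B21 B22 l1 l2 l3 φ ρ : ℝ)
    (hB11 : 0 < B11) (hB12 : 0 < B12) (hB21 : 0 < B21) (hB22 : 0 < B22)
    (hrow1 : B11 + B12 = 1) (hrow2 : B21 + B22 = 1)
    (hA1 : B11 * B22 - B12 * B21 ≥ 0)
    (hl1 : 0 < l1) (hl2 : 0 < l2) (hl3 : 0 < l3)
    (hφ0 : 0 < φ) (hφ1 : φ < 1) (hρ0 : 0 ≤ ρ) (hρ1 : ρ < 1) :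
    -- bounded to bounded
    (∀ V : ℝ → ℝ, (∃ M, ∀ q ∈ Set.Icc (0:ℝ) 1, |V q| ≤ M) →
      ∃ M, ∀ q ∈ Set.Icc (0:ℝ) 1, |slT B11 B12 B21 B22 l1 l2 l3 φ ρ V q| ≤ M) ∧
    -- continuous to continuous
    (∀ V : ℝ → ℝ, ContinuousOn V (Set.Icc (0:ℝ) 1) →
      ContinuousOn (slT B11 B12 B21 B22 l1 l2 l3 φ ρ V) (Set.Icc (0:ℝ) 1)) ∧
    -- contraction with Lipschitz constant ρ in the sup norm over [0,1]
    (∀ V W : ℝ → ℝ, ∀ C : ℝ, (∀ q ∈ Set.Icc (0:ℝ) 1, |V q - W q| ≤ C) →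
      ∀ q ∈ Set.Icc (0:ℝ) 1,
        |slT B11 B12 B21 B22 l1 l2 l3 φ ρ V q - slT B11 B12 B21 B22 l1 l2 l3 φ ρ W q| ≤ ρ * C) ∧
    -- existence of a bounded fixed point, unique among bounded functions, continuous,
    -- and nonincreasing on [0,1]
    (∃ V : ℝ → ℝ,
      (∃ M, ∀ q ∈ Set.Icc (0:ℝ) 1, |V q| ≤ M) ∧
      (∀ q ∈ Set.Icc (0:ℝ) 1, slT B11 B12 B21 B22 l1 l2 l3 φ ρ V q = V q) ∧
      (∀ W : ℝ → ℝ, (∃ M, ∀ q ∈ Set.Icc (0:ℝ) 1, |W q| ≤ M) →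
        (∀ q ∈ Set.Icc (0:ℝ) 1, slT B11 B12 B21 B22 l1 l2 l3 φ ρ W q = W q) →
        ∀ q ∈ Set.Icc (0:ℝ) 1, W q = V q) ∧
      ContinuousOn V (Set.Icc (0:ℝ) 1) ∧
      (∀ q1 q2 : ℝ, 0 ≤ q1 → q1 ≤ q2 → q2 ≤ 1 → V q2 ≤ V q1)) := by
  refine ⟨slT_bounded hB11 hB12 hB21 hB22 hrow1 hrow2 hρ0,
    slT_cont hB11 hB12 hB21 hB22,
    slT_contraction hB11 hB12 hB21 hB22 hrow1 hrow2 hρ0, ?_⟩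
  classical
  -- the lift of a continuous function on the interval to the real line
  set lift : C(↥(Set.Icc (0:ℝ) 1), ℝ) → ℝ → ℝ :=
    fun f q => f (Set.projIcc 0 1 zero_le_one q) with hlift
  have lift_cont : ∀ f, Continuous (lift f) := fun f => f.continuous.comp continuous_projIcc
  have lift_eq : ∀ f (q : ℝ) (hq : q ∈ Set.Icc (0:ℝ) 1), lift f q = f ⟨q, hq⟩ := by
    intro f q hq
    simp [hlift, Set.projIcc_of_mem zero_le_one hq]
  -- the Bellman operator on the space of continuous functions
  set Tc : C(↥(Set.Icc (0:ℝ) 1), ℝ) → C(↥(Set.Icc (0:ℝ) 1), ℝ) := fun f =>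
    ⟨(Set.Icc (0:ℝ) 1).restrict (slT B11 B12 B21 B22 l1 l2 l3 φ ρ (lift f)),
      (slT_cont hB11 hB12 hB21 hB22 (lift f) (lift_cont f).continuousOn).restrict⟩ with hTc
  have Tc_apply : ∀ f (x : ↥(Set.Icc (0:ℝ) 1)),
      Tc f x = slT B11 B12 B21 B22 l1 l2 l3 φ ρ (lift f) ↑x := fun f x => rfl
  have hdistpt : ∀ f g : C(↥(Set.Icc (0:ℝ) 1), ℝ), ∀ q ∈ Set.Icc (0:ℝ) 1,
      |lift f q - lift g q| ≤ dist f g := by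
    intro f g q hq
    rw [lift_eq f q hq, lift_eq g q hq, ← Real.dist_eq]
    exact ContinuousMap.dist_apply_le_dist _
  have hContr : ContractingWith ⟨ρ, hρ0⟩ Tc := by
    constructor
    · exact_mod_cast hρ1
    · apply LipschitzWith.of_dist_le_mul
      intro f g
      have hd : (0:ℝ) ≤ ρ * dist f g := mul_nonneg hρ0 dist_nonneg
      change dist (Tc f) (Tc g) ≤ ρ * dist f g
      rw [ContinuousMap.dist_le hd]
      intro x
      rw [Tc_apply, Tc_apply, Real.dist_eq]
      exact slT_contraction hB11 hB12 hB21 hB22 hrow1 hrow2 hρ0 (lift f) (lift g)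
        (dist f g) (hdistpt f g) ↑x x.2
  set fstar := ContractingWith.fixedPoint Tc hContr with hfstar
  have hfix : Tc fstar = fstar := hContr.fixedPoint_isFixedPt
  -- boundedness of the fixed point
  have hbdd : ∀ q ∈ Set.Icc (0:ℝ) 1, |lift fstar q| ≤ ‖fstar‖ := by
    intro q hq
    rw [lift_eq _ q hq, ← Real.norm_eq_abs]
    exact fstar.norm_coe_le_norm _
  -- fixed point property on the interval
  have hVfix : ∀ q ∈ Set.Icc (0:ℝ) 1,
      slT B11 B12 B21 B22 l1 l2 l3 φ ρ (lift fstar) q = lift fstar q := by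
    intro q hq
    have h := congrFun (congrArg DFunLike.coe hfix) ⟨q, hq⟩
    rw [Tc_apply] at h
    rw [lift_eq _ q hq]
    exact h
  refine ⟨lift fstar, ⟨‖fstar‖, hbdd⟩, hVfix, ?_, (lift_cont fstar).continuousOn, ?_⟩
  · -- uniqueness
    intro W hWB hWfix q hq
    obtain ⟨MW, hMW⟩ := hWB
    have hbV : ∀ r ∈ Set.Icc (0:ℝ) 1, |W r - lift fstar r| ≤ MW + ‖fstar‖ := by
      intro r hr
      have h1 := hMW r hr
      have h2 := hbdd r hr
      calc |W r - lift fstar r| ≤ |W r| + |lift fstar r| := by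
            rw [sub_eq_add_neg]
            exact (abs_add_le _ _).trans (by rw [abs_neg])
        _ ≤ MW + ‖fstar‖ := add_le_add h1 h2
    have hiter : ∀ n : ℕ, ∀ r ∈ Set.Icc (0:ℝ) 1,
        |W r - lift fstar r| ≤ ρ ^ n * (MW + ‖fstar‖) := by
      intro n
      induction n with
      | zero => simpa using hbV
      | succ n ih =>
        intro r hr
        have key := slT_contraction (l1:=l1) (l2:=l2) (l3:=l3) (φ:=φ) hB11 hB12 hB21 hB22 hrow1 hrow2 hρ0 W (lift fstar)
          (ρ ^ n * (MW + ‖fstar‖)) ih r hr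
        rw [hWfix r hr, hVfix r hr] at key
        calc |W r - lift fstar r| ≤ ρ * (ρ ^ n * (MW + ‖fstar‖)) := key
          _ = ρ ^ (n + 1) * (MW + ‖fstar‖) := by ring
    have htend : Filter.Tendsto (fun n : ℕ => ρ ^ n * (MW + ‖fstar‖)) Filter.atTop (nhds 0) := by
      simpa using (tendsto_pow_atTop_nhds_zero_of_lt_one hρ0 hρ1).mul_const (MW + ‖fstar‖)
    have hle : |W q - lift fstar q| ≤ 0 :=
      ge_of_tendsto' htend fun n => hiter n q hq
    have := abs_nonpos_iff.1 hle
    linarith [sub_eq_zero.1 this]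
  · -- antitone
    have hPn : ∀ n : ℕ, ∀ a b : ℝ, 0 ≤ a → a ≤ b → b ≤ 1 →
        lift (Tc^[n] 0) b ≤ lift (Tc^[n] 0) a := by
      intro n
      induction n with
      | zero => intro a b _ _ _; simp [hlift]
      | succ n ih =>
        intro a b h0 hab h1
        have hma : a ∈ Set.Icc (0:ℝ) 1 := ⟨h0, hab.trans h1⟩
        have hmb : b ∈ Set.Icc (0:ℝ) 1 := ⟨h0.trans hab, h1⟩
        rw [Function.iterate_succ_apply', lift_eq _ b hmb, lift_eq _ a hma,
          Tc_apply, Tc_apply]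
        exact slT_anti hB11 hB12 hB21 hB22 hrow1 hrow2 hA1 hl1 hl2 hρ0
          (lift (Tc^[n] 0)) ih a b h0 hab h1
    intro q1 q2 h0 h12 h1
    have hm1 : q1 ∈ Set.Icc (0:ℝ) 1 := ⟨h0, h12.trans h1⟩
    have hm2 : q2 ∈ Set.Icc (0:ℝ) 1 := ⟨h0.trans h12, h1⟩
    have htd := hContr.tendsto_iterate_fixedPoint (0 : C(↥(Set.Icc (0:ℝ) 1), ℝ))
    have hev : ∀ x : ↥(Set.Icc (0:ℝ) 1),
        Filter.Tendsto (fun n : ℕ => (Tc^[n] 0) x) Filter.atTop (nhds (fstar x)) :=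
      fun x => ((continuous_eval_const x).tendsto fstar).comp htd
    rw [lift_eq _ q2 hm2, lift_eq _ q1 hm1]
    refine le_of_tendsto_of_tendsto' (hev ⟨q2, hm2⟩) (hev ⟨q1, hm1⟩) fun n => ?_
    have h := hPn n q1 q2 h0 h12 h1
    rwa [lift_eq _ q2 hm2, lift_eq _ q1 hm1] at h
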